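/- Let σ ≥ 2, and let T and P be strings over [0..σ). Set k = ⌈log₂ σ⌉, P' = ebin_k(P), T' = ebin_k(T), and Δ = |T'| − |T|. Then RangeBeg(P,T) = RangeBeg(P',T') − Δ. -/

import Mathlib

/-- Strict lexicographic order on strings: `U ≺ V` iff `U` is a proper prefix of `V`,
or `U` and `V` first differ at a position where `U` has the smaller symbol. -/
def LexLt {α : Type*} [LT α] (U V : List α) : Prop := List.Lex (· < ·) U V

/-- Non-strict lexicographic order on strings. -/
def LexLe {α : Type*} [LT α] (U V : List α) : Prop := LexLt U V ∨ U = V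

/-- The suffix `T[j..|T|]` of `T` (1-based index `j`). -/
def Suf {α : Type*} (T : List α) (j : ℕ) : List α := T.drop (j - 1)

/-- `Occ P T` is the set of starting positions (1-based) of occurrences of `P` in `T`. -/
def Occ {α : Type*} (P T : List α) : Set ℕ :=
  { j | 1 ≤ j ∧ j + P.length ≤ T.length + 1 ∧ (Suf T j).take P.length = P }

/-- `RangeBeg P T` = number of suffixes of `T` lexicographically smaller than `P`. -/
noncomputable def RangeBeg {α : Type*} [LT α] (P T : List α) : ℕ :=
  { j | 1 ≤ j ∧ j ≤ T.length ∧ LexLt (Suf T j) P }.ncard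

/-- `RangeEnd P T = RangeBeg P T + |Occ P T|`. -/
noncomputable def RangeEnd {α : Type*} [LT α] (P T : List α) : ℕ :=
  RangeBeg P T + (Occ P T).ncard

/-- `LexRange P₁ P₂ T` = positions `j ∈ [1..|T|]` with `P₁ ⪯ T[j..|T|] ≺ P₂`. -/
def LexRange {α : Type*} [LT α] (P₁ P₂ T : List α) : Set ℕ :=
  { j | 1 ≤ j ∧ j ≤ T.length ∧ LexLe P₁ (Suf T j) ∧ LexLt (Suf T j) P₂ }

/-- `sa` is the suffix array of `T` (1-based): a permutation of `[1..|T|]` listing the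
starting positions of the suffixes of `T` in increasing lexicographic order. -/
def IsSuffixArray {α : Type*} [LT α] (T : List α) (sa : ℕ → ℕ) : Prop :=
  (∀ i, 1 ≤ i → i ≤ T.length → 1 ≤ sa i ∧ sa i ≤ T.length) ∧
  (∀ j, 1 ≤ j → j ≤ T.length → ∃ i, 1 ≤ i ∧ i ≤ T.length ∧ sa i = j) ∧
  (∀ i j, 1 ≤ i → i < j → j ≤ T.length → LexLt (Suf T (sa i)) (Suf T (sa j)))

/-- `binSym k x` : the length-`k` binary representation of `x` (MSB first, leading zeros). -/
def binSym (k x : ℕ) : List ℕ := (List.range k).map fun i => x / 2 ^ (k - 1 - i) % 2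

/-- `binStr k S` = `bin_k(S[1]) · bin_k(S[2]) · … · bin_k(S[|S|])`. -/
def binStr (k : ℕ) (S : List ℕ) : List ℕ := (S.map (binSym k)).flatten

/-- `ebinSym k x = 1^{k+1} · 0 · bin_k(x) · 0`. -/
def ebinSym (k x : ℕ) : List ℕ := List.replicate (k + 1) 1 ++ [0] ++ binSym k x ++ [0]

/-- `ebinStr k S` = concatenation of `ebin_k(S[i])` for `i = 1, …, |S|`. -/
def ebinStr (k : ℕ) (S : List ℕ) : List ℕ := (S.map (ebinSym k)).flatten

/-- `sEnc k i` : length-`k` base-2 representation of `i` with `0 ↦ 2` and `1 ↦ 3`. -/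
def sEnc (k i : ℕ) : List ℕ := (binSym k i).map (· + 2)

/-- `SeqToString m W = ⊙_{i=1}^{m} rev(W[i]) · 4 · s(i-1)` with `k = 1 + ⌊log₂ m⌋`. -/
def SeqToString (m : ℕ) (W : ℕ → List ℕ) : List ℕ :=
  ((List.range m).map
    fun i => (W (i + 1)).reverse ++ [4] ++ sEnc (1 + Nat.log 2 m) i).flatten

/-- `PermSeqToString m π W = ⊙_{i=1}^{m} rev(W[π[i]]) · 4 · s(π[i]-1)`. -/
def PermSeqToString (m : ℕ) (perm : ℕ → ℕ) (W : ℕ → List ℕ) : List ℕ :=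
  ((List.range m).map
    fun i => (W (perm (i + 1))).reverse ++ [4]
      ++ sEnc (1 + Nat.log 2 m) (perm (i + 1) - 1)).flatten

/-- `PrefixRank W j X = |{ i ∈ [1..j] : X is a prefix of W[i] }|`. -/
noncomputable def PrefixRank {α : Type*} (W : ℕ → List α) (j : ℕ) (X : List α) : ℕ :=
  { i | 1 ≤ i ∧ i ≤ j ∧ X <+: W i }.ncard

/-- `p` is the `r`-th smallest element of the set `A ⊆ ℕ`. -/
def IsKthSmallest (A : Set ℕ) (r p : ℕ) : Prop :=
  p ∈ A ∧ (A ∩ Set.Iic p).ncard = r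

/-- Ceiling division `⌈a / b⌉` of positive naturals. -/
def cdiv (a b : ℕ) : ℕ := (a + b - 1) / b

/-- Alphabet inversion: `inv_σ(S)[i] = σ - 1 - S[i]`. -/
def invStr (σ : ℕ) (S : List ℕ) : List ℕ := S.map fun a => σ - 1 - a

/-- `p` is a period of `S`: `1 ≤ p ≤ |S|` and `S[i] = S[i+p]` for all `i ∈ [1..|S|-p]`. -/
def IsPeriod {α : Type*} (S : List α) (p : ℕ) : Prop :=
  1 ≤ p ∧ p ≤ S.length ∧ S.drop p <+: S

/-- `per S`: the smallest period of `S`. -/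
noncomputable def per {α : Type*} (S : List α) : ℕ := sInf { p | IsPeriod S p }

/-- `P` is `τ`-periodic: `|P| ≥ 3τ - 1` and `per(P[1..3τ-1]) ≤ τ/3`. -/
noncomputable def TauPeriodic {α : Type*} (τ : ℕ) (P : List α) : Prop :=
  3 * τ ≤ P.length + 1 ∧ 3 * per (P.take (3 * τ - 1)) ≤ τ

/-- `R(τ,T) = { i ∈ [1..n-3τ+2] : per(T[i..i+3τ-2]) ≤ τ/3 }`. -/
noncomputable def Rset {α : Type*} (τ : ℕ) (T : List α) : Set ℕ :=
  { i | 1 ≤ i ∧ i + 3 * τ ≤ T.length + 2 ∧ 3 * per ((Suf T i).take (3 * τ - 1)) ≤ τ }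

/-- `S` is a `τ`-synchronizing set of `T` (consistency and density conditions). -/
noncomputable def IsSyncSet {α : Type*} (τ : ℕ) (T : List α) (S : Set ℕ) : Prop :=
  (∀ j ∈ S, 1 ≤ j ∧ j + 2 * τ ≤ T.length + 1) ∧
  (∀ i j, 1 ≤ i → i + 2 * τ ≤ T.length + 1 → 1 ≤ j → j + 2 * τ ≤ T.length + 1 →
    (Suf T i).take (2 * τ) = (Suf T j).take (2 * τ) → (i ∈ S ↔ j ∈ S)) ∧
  (∀ i, 1 ≤ i → i + 3 * τ ≤ T.length + 2 → (S ∩ Set.Ico i (i + τ) = ∅ ↔ i ∈ Rset τ T))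

/-- `succ_S(x) = min { x' ∈ S : x' ≥ x }`. -/
noncomputable def succS (S : Set ℕ) (x : ℕ) : ℕ := sInf (S ∩ Set.Ici x)

/-- `DistPrefixes(τ,T,S) = { T[j..succ_S(j)+2τ) : j ∈ [1..n-3τ+2] \ R(τ,T) }`. -/
noncomputable def DistPrefixes {α : Type*} (τ : ℕ) (T : List α) (S : Set ℕ) : Set (List α) :=
  (fun j => (Suf T j).take (succS S j + 2 * τ - j)) ''
    { j | 1 ≤ j ∧ j + 3 * τ ≤ T.length + 2 ∧ j ∉ Rset τ T }

/-- `r` is the value of the prefix RMQ: the smallest index `i ∈ (b..e]` with `X` a prefix of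
`W[i]` minimizing `A[i]` (ties broken towards the smaller index). -/
def IsPrefixRMQ (A : ℕ → ℤ) (W : ℕ → List ℕ) (b e : ℕ) (X : List ℕ) (r : ℕ) : Prop :=
  (b < r ∧ r ≤ e ∧ X <+: W r) ∧
  (∀ i, b < i → i ≤ e → X <+: W i → A r ≤ A i) ∧
  (∀ i, b < i → i ≤ e → X <+: W i → A i = A r → r ≤ i)

section Aux
open List Finset

lemma lexlt_def (U V : List ℕ) : LexLt U V ↔ U < V := Iff.rfl

lemma binSym_length (k x : ℕ) : (binSym k x).length = k := by simp [binSym]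

lemma ebinSym_length (k x : ℕ) : (ebinSym k x).length = 2*k+3 := by
  simp [ebinSym, binSym_length]; omega

lemma ebinStr_cons (k a : ℕ) (S : List ℕ) :
    ebinStr k (a :: S) = ebinSym k a ++ ebinStr k S := by simp [ebinStr]

lemma ebinStr_length (k : ℕ) (S : List ℕ) : (ebinStr k S).length = S.length * (2*k+3) := by
  induction S with
  | nil => simp [ebinStr]
  | cons a S ih => rw [ebinStr_cons]; simp [ih, ebinSym_length]; ring

lemma binSym_succ (k x : ℕ) : binSym (k+1) x = binSym k (x/2) ++ [x % 2] := by
  unfold binSym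
  rw [List.range_succ, List.map_append]
  congr 1
  · apply List.map_congr_left
    intro i hi
    simp only [List.mem_range] at hi
    have h1 : k + 1 - 1 - i = (k - 1 - i) + 1 := by omega
    rw [h1, pow_succ, ← Nat.div_div_eq_div_mul, Nat.div_div_eq_div_mul, mul_comm,
      Nat.div_div_eq_div_mul]
  · simp

lemma lex_append_left {u v : List ℕ} (w : List ℕ) (h : List.Lex (·<·) u v) :
    List.Lex (·<·) (w ++ u) (w ++ v) := by
  induction w with
  | nil => simpa
  | cons a w ih => exact List.Lex.cons ih

lemma lex_append_of_length_eq : ∀ {x y : List ℕ}, x.length = y.length →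
    List.Lex (·<·) x y → ∀ u v, List.Lex (·<·) (x ++ u) (y ++ v) := by
  intro x y hlen h
  induction h with
  | nil => simp at hlen
  | @rel a l b l' hab => intro u v; exact List.Lex.rel hab
  | @cons a l l' h ih =>
      intro u v
      simp at hlen
      exact List.Lex.cons (ih hlen u v)

lemma binSym_mono : ∀ (k : ℕ) {a b : ℕ}, a < b → b < 2^k →
    List.Lex (·<·) (binSym k a) (binSym k b) := by
  intro k
  induction k with
  | zero => intro a b hab hb; simp at hb; omega
  | succ k ih =>
      intro a b hab hb
      rw [binSym_succ, binSym_succ]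
      have hb2 : b / 2 < 2^k := by
        rw [Nat.div_lt_iff_lt_mul (by norm_num)]
        calc b < 2^(k+1) := hb
        _ = 2^k * 2 := by ring
      rcases lt_or_eq_of_le (Nat.div_le_div_right (le_of_lt hab) : a/2 ≤ b/2) with h | h
      · exact lex_append_of_length_eq (by simp [binSym_length]) (ih h hb2) _ _
      · rw [h]
        apply lex_append_left
        apply List.Lex.rel
        omega

lemma ebin_mono {k : ℕ} : ∀ {U V : List ℕ}, (∀ a ∈ V, a < 2^k) →
    List.Lex (·<·) U V → List.Lex (·<·) (ebinStr k U) (ebinStr k V) := by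
  intro U V hV h
  induction h with
  | @nil b l =>
      rw [ebinStr_cons]
      have : ebinSym k b ++ ebinStr k l =
          1 :: (List.replicate k 1 ++ [0] ++ binSym k b ++ [0] ++ ebinStr k l) := by
        simp [ebinSym, List.replicate_succ]
      rw [show ebinStr k ([] : List ℕ) = [] from rfl, this]
      exact List.Lex.nil
  | @rel a l b l' hab =>
      rw [ebinStr_cons, ebinStr_cons]
      have hb : b < 2^k := hV b (by simp)
      have key : List.Lex (·<·) (binSym k a ++ (0 :: ebinStr k l))
          (binSym k b ++ (0 :: ebinStr k l')) :=
        lex_append_of_length_eq (by simp [binSym_length]) (binSym_mono k hab hb) _ _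
      have e1 : ebinSym k a ++ ebinStr k l =
          (List.replicate (k+1) 1 ++ [0]) ++ (binSym k a ++ (0 :: ebinStr k l)) := by
        simp [ebinSym]
      have e2 : ebinSym k b ++ ebinStr k l' =
          (List.replicate (k+1) 1 ++ [0]) ++ (binSym k b ++ (0 :: ebinStr k l')) := by
        simp [ebinSym]
      rw [e1, e2]
      exact lex_append_left _ key
  | @cons a l l' h ih =>
      rw [ebinStr_cons, ebinStr_cons]
      exact lex_append_left _ (ih (fun x hx => hV x (by simp [hx])))

lemma ebin_iff {k : ℕ} {U V : List ℕ} (hU : ∀ a ∈ U, a < 2^k) (hV : ∀ a ∈ V, a < 2^k) :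
    List.Lex (·<·) U V ↔ List.Lex (·<·) (ebinStr k U) (ebinStr k V) := by
  constructor
  · exact ebin_mono hV
  · intro h
    rcases lt_trichotomy U V with h' | h' | h'
    · exact h'
    · subst h'
      have h2 : ebinStr k U < ebinStr k U := h
      exact absurd h2 (lt_irrefl _)
    · have h2 : ebinStr k U < ebinStr k V := h
      have h3 : ebinStr k V < ebinStr k U := ebin_mono hU h'
      exact absurd h2 (lt_asymm h3)

lemma ones_then_zero : ∀ (w : List ℕ), (∀ a ∈ w, a < 2) →
    ∃ b ≤ w.length, ∃ s, w ++ [0] = List.replicate b 1 ++ 0 :: s := by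
  intro w
  induction w with
  | nil => intro _; exact ⟨0, le_refl _, [], rfl⟩
  | cons a w ih =>
      intro hw
      have ha2 := hw a (by simp)
      interval_cases a
      · exact ⟨0, Nat.zero_le _, w ++ [0], by simp⟩
      · obtain ⟨b, hb, s, hs⟩ := ih (fun x hx => hw x (by simp [hx]))
        refine ⟨b+1, by simp; omega, s, ?_⟩
        rw [List.replicate_succ]
        simp only [List.cons_append, hs]

lemma mid_shape {k x : ℕ} (i : ℕ) (h1 : 1 ≤ i) (h2 : i < 2*k+3) :
    ∃ b ≤ k, ∃ s, (ebinSym k x).drop i = List.replicate b 1 ++ 0 :: s := by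
  have hsplit : ebinSym k x = List.replicate (k+1) 1 ++ (0 :: (binSym k x ++ [0])) := by
    simp [ebinSym]
  rcases le_or_gt i (k+1) with h | h
  · refine ⟨k+1-i, by omega, binSym k x ++ [0], ?_⟩
    rw [hsplit, List.drop_append, List.drop_replicate]
    have : i - (List.replicate (k+1) (1:ℕ)).length = 0 := by simp; omega
    rw [this]
    rfl
  · -- i ≥ k+2 : we land inside binSym ++ [0]
    set j := i - (k+2) with hj
    have hjk : j ≤ k := by omega
    have hdrop : (ebinSym k x).drop i = (binSym k x).drop j ++ [0] := by
      rw [hsplit, List.drop_append, List.drop_replicate]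
      have e1 : k + 1 - i = 0 := by omega
      have e2 : i - (List.replicate (k+1) (1:ℕ)).length = j + 1 := by simp; omega
      rw [e1, e2]
      simp only [List.replicate_zero, List.nil_append, List.drop_succ_cons]
      rw [List.drop_append]
      have : j - (binSym k x).length = 0 := by rw [binSym_length]; omega
      rw [this]
      rfl
    obtain ⟨b, hb, s, hs⟩ := ones_then_zero ((binSym k x).drop j)
      (fun a ha => by
        have : a ∈ binSym k x := List.mem_of_mem_drop ha
        simp [binSym] at this
        obtain ⟨m, _, rfl⟩ := this
        exact Nat.mod_lt _ (by norm_num))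
    refine ⟨b, ?_, s, by rw [hdrop, hs]⟩
    have : ((binSym k x).drop j).length = (binSym k x).length - j := List.length_drop
    rw [binSym_length] at this
    omega

lemma mid_lt : ∀ (b : ℕ) (k : ℕ), b ≤ k → ∀ (s t : List ℕ),
    List.Lex (·<·) (List.replicate b 1 ++ 0 :: s) (List.replicate (k+1) 1 ++ t) := by
  intro b
  induction b with
  | zero =>
      intro k _ s t
      rw [List.replicate_succ]
      exact List.Lex.rel (by norm_num)
  | succ b ih =>
      intro k hb s t
      obtain ⟨m, rfl⟩ : ∃ m, k = m + 1 := ⟨k - 1, by omega⟩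
      rw [List.replicate_succ, List.replicate_succ (n := m+1)]
      exact List.Lex.cons (ih m (by omega) s t)

open Classical in
noncomputable def rb (P T : List ℕ) : ℕ :=
  ∑ i ∈ Finset.range T.length, if List.Lex (·<·) (T.drop i) P then 1 else 0

open Classical in
lemma RangeBeg_eq_rb (P T : List ℕ) : RangeBeg P T = rb P T := by
  classical
  have hset : { j | 1 ≤ j ∧ j ≤ T.length ∧ LexLt (Suf T j) P } =
      ↑(((Finset.range T.length).filter
          (fun i => List.Lex (·<·) (T.drop i) P)).image (· + 1)) := by
    ext j
    simp only [Set.mem_setOf_eq, Finset.coe_image, Set.mem_image, Finset.mem_coe,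
      Finset.mem_filter, Finset.mem_range]
    constructor
    · rintro ⟨h1, h2, h3⟩
      exact ⟨j - 1, ⟨by omega, h3⟩, by omega⟩
    · rintro ⟨i, ⟨hi, hlex⟩, rfl⟩
      refine ⟨by omega, by omega, ?_⟩
      show List.Lex (·<·) (T.drop (i+1-1)) P
      simpa using hlex
  rw [RangeBeg, hset, Set.ncard_coe_finset,
    Finset.card_image_of_injective _ (fun a b h => by omega),
    Finset.card_filter]
  rfl

open Classical in
lemma rb_cons (P : List ℕ) (a : ℕ) (T : List ℕ) :
    rb P (a :: T) = rb P T + (if List.Lex (·<·) (a :: T) P then 1 else 0) := by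
  unfold rb
  rw [List.length_cons, Finset.sum_range_succ']
  simp only [List.drop_succ_cons, List.drop_zero]

open Classical in
lemma rb_append (P U V : List ℕ) :
    rb P (U ++ V) =
      (∑ i ∈ Finset.range U.length, if List.Lex (·<·) (U.drop i ++ V) P then 1 else 0)
        + rb P V := by
  induction U with
  | nil => simp
  | cons a U ih =>
      rw [List.cons_append, rb_cons, ih, List.length_cons, Finset.sum_range_succ']
      simp only [List.drop_succ_cons, List.drop_zero, List.cons_append]
      ring

open Classical in
lemma rb_main {k : ℕ} (P : List ℕ) (p : ℕ) (P0 : List ℕ) (hP : P = p :: P0)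
    (hPk : ∀ a ∈ P, a < 2^k) :
    ∀ (T : List ℕ), (∀ a ∈ T, a < 2^k) →
    rb (ebinStr k P) (ebinStr k T) = rb P T + T.length * (2*k+2) := by
  intro T
  induction T with
  | nil => intro _; simp [rb, ebinStr]
  | cons a T ih =>
      intro hT
      have hTk : ∀ x ∈ T, x < 2^k := fun x hx => hT x (by simp [hx])
      have hak : a < 2^k := hT a (by simp)
      rw [ebinStr_cons, rb_append, ih hTk, ebinSym_length]
      have hsum : (∑ i ∈ Finset.range (2*k+3),
          if List.Lex (·<·) ((ebinSym k a).drop i ++ ebinStr k T) (ebinStr k P) then 1 else 0)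
          = (if List.Lex (·<·) (a :: T) P then 1 else 0) + (2*k+2) := by
        have h3 : 2*k+3 = (2*k+2) + 1 := by omega
        rw [h3, Finset.sum_range_succ']
        have hmid : ∀ i ∈ Finset.range (2*k+2),
            (if List.Lex (·<·) ((ebinSym k a).drop (i+1) ++ ebinStr k T) (ebinStr k P)
              then 1 else 0) = 1 := by
          intro i hi
          rw [if_pos]
          simp only [Finset.mem_range] at hi
          obtain ⟨b, hb, s, hs⟩ := mid_shape (k := k) (x := a) (i+1) (by omega) (by omega)
          rw [hs]
          have hP' : ebinStr k P = List.replicate (k+1) 1 ++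
              ([0] ++ binSym k p ++ [0] ++ ebinStr k P0) := by
            rw [hP, ebinStr_cons]
            simp [ebinSym]
          rw [hP', List.append_assoc, List.cons_append]
          exact mid_lt b k hb _ _
        rw [Finset.sum_congr rfl hmid]
        simp only [List.drop_zero, Finset.sum_const, Finset.card_range, smul_eq_mul, mul_one]
        have haT : ∀ x ∈ a :: T, x < 2^k := by
          intro x hx
          rcases List.mem_cons.mp hx with rfl | hx'
          · exact hak
          · exact hTk x hx'
        have h0 : List.Lex (·<·) (ebinSym k a ++ ebinStr k T) (ebinStr k P) ↔
            List.Lex (·<·) (a :: T) P := by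
          rw [← ebinStr_cons]
          exact (ebin_iff haT hPk).symm
        simp only [h0]
        exact Nat.add_comm _ _
      rw [hsum, rb_cons]
      simp only [List.length_cons]
      ring

end Aux

theorem stmt9 (σ : ℕ) (hσ : 2 ≤ σ) (T P : List ℕ)
    (hTa : ∀ a ∈ T, a < σ) (hPa : ∀ a ∈ P, a < σ) :
    RangeBeg P T =
      RangeBeg (ebinStr (Nat.clog 2 σ) P) (ebinStr (Nat.clog 2 σ) T) -
        ((ebinStr (Nat.clog 2 σ) T).length - T.length) := by
  set k := Nat.clog 2 σ with hk
  have hσk : σ ≤ 2^k := Nat.le_pow_clog (by norm_num) σ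
  have hTk : ∀ a ∈ T, a < 2^k := fun a ha => lt_of_lt_of_le (hTa a ha) hσk
  have hPk : ∀ a ∈ P, a < 2^k := fun a ha => lt_of_lt_of_le (hPa a ha) hσk
  cases P with
  | nil =>
      have hempty : ∀ (X : List ℕ), RangeBeg ([] : List ℕ) X = 0 := by
        intro X
        have hs : { j | 1 ≤ j ∧ j ≤ X.length ∧ LexLt (Suf X j) ([] : List ℕ) } = ∅ := by
          ext j
          simp only [Set.mem_setOf_eq, Set.mem_empty_iff_false, iff_false]
          rintro ⟨_, _, h⟩
          revert h
          generalize Suf X j = u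
          intro h
          cases h
        rw [RangeBeg, hs, Set.ncard_empty]
      have he : ebinStr k ([] : List ℕ) = [] := rfl
      rw [he, hempty T, hempty (ebinStr k T)]
      simp
  | cons p P0 =>
      rw [RangeBeg_eq_rb, RangeBeg_eq_rb, ebinStr_length,
        rb_main (p :: P0) p P0 rfl hPk T hTk]
      have h2 : T.length * (2*k+3) = T.length * (2*k+2) + T.length := by ring
      rw [h2, Nat.add_sub_cancel, Nat.add_sub_cancel]
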